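/- arXiv:1512.05727 — 2 statements merged into one kernel-verified Lean document; each statement's English description precedes it below -/
import Mathlib

section
/- Let n ≥ 2 be a natural number. The alternating group A_n has no complex irreducible representation of degree 2. -/
open Equiv Module CategoryTheory

section MatrixLemma

private theorem AG2_mat2_scalar (A : Matrix (Fin 2) (Fin 2) ℂ) (h1 : A * A = 1)
    (hdet : A.det = 1) : A = 1 ∨ A = -1 := by
  have e00 : A 0 0 * A 0 0 + A 0 1 * A 1 0 = 1 := by
    have := congr_fun (congr_fun h1 0) 0
    simpa [Matrix.mul_apply, Fin.sum_univ_two, Matrix.one_apply] using this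
  have e01 : A 0 0 * A 0 1 + A 0 1 * A 1 1 = 0 := by
    have := congr_fun (congr_fun h1 0) 1
    simpa [Matrix.mul_apply, Fin.sum_univ_two, Matrix.one_apply] using this
  have e10 : A 1 0 * A 0 0 + A 1 1 * A 1 0 = 0 := by
    have := congr_fun (congr_fun h1 1) 0
    simpa [Matrix.mul_apply, Fin.sum_univ_two, Matrix.one_apply] using this
  have e11 : A 1 0 * A 0 1 + A 1 1 * A 1 1 = 1 := by
    have := congr_fun (congr_fun h1 1) 1
    simpa [Matrix.mul_apply, Fin.sum_univ_two, Matrix.one_apply] using this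
  have e5 : A 0 0 * A 1 1 - A 0 1 * A 1 0 = 1 := by
    rw [Matrix.det_fin_two] at hdet; linear_combination hdet
  have had2 : A 0 0 * (A 0 0 + A 1 1) = 2 := by linear_combination e00 + e5
  have hdd2 : A 1 1 * (A 0 0 + A 1 1) = 2 := by linear_combination e11 + e5
  have hs : A 0 0 + A 1 1 ≠ 0 := by
    intro h; rw [h, mul_zero] at had2; exact two_ne_zero had2.symm
  have had : A 0 0 = A 1 1 := by
    have h0 : (A 0 0 - A 1 1) * (A 0 0 + A 1 1) = 0 := by linear_combination had2 - hdd2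
    rcases mul_eq_zero.1 h0 with h | h
    · exact sub_eq_zero.1 h
    · exact absurd h hs
  have hb0 : A 0 1 = 0 := by
    have h0 : A 0 1 * (A 0 0 + A 1 1) = 0 := by linear_combination e01
    rcases mul_eq_zero.1 h0 with h | h
    · exact h
    · exact absurd h hs
  have hc0 : A 1 0 = 0 := by
    have h0 : A 1 0 * (A 0 0 + A 1 1) = 0 := by linear_combination e10
    rcases mul_eq_zero.1 h0 with h | h
    · exact h
    · exact absurd h hs
  have ha1 : A 0 0 = 1 ∨ A 0 0 = -1 := by
    refine mul_self_eq_one_iff.1 ?_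
    linear_combination had2 / 2 + (A 0 0) * had / 2
  have heta : A = !![A 0 0, A 0 1; A 1 0, A 1 1] := Matrix.eta_fin_two A
  rcases ha1 with h | h
  · left
    rw [heta, hb0, hc0, ← had, h]
    exact Matrix.one_fin_two.symm
  · right
    rw [heta, hb0, hc0, ← had, h]
    rw [show (-1 : Matrix (Fin 2) (Fin 2) ℂ) = -(1 : Matrix (Fin 2) (Fin 2) ℂ) from rfl,
      Matrix.one_fin_two]
    ext i j
    fin_cases i <;> fin_cases j <;> simp

end MatrixLemma

section KleinLemma

private theorem AG2_rho_eq_one_of_klein {G : Type} [Group G] (V : FDRep ℂ G)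
    (h2 : finrank ℂ V = 2) (g₁ g₂ g₃ x : G)
    (hg : g₁ * g₁ = 1) (hgg : g₁ * g₂ = g₃)
    (hx₁ : x * g₁ = g₂ * x) (hx₂ : x * g₂ = g₃ * x) :
    V.ρ g₁ = 1 ∧ V.ρ g₂ = 1 ∧ V.ρ g₃ = 1 := by
  have hmat := AG2_mat2_scalar
  have b : Basis (Fin 2) ℂ V := Module.finBasisOfFinrankEq ℂ V h2
  let E := LinearMap.toMatrixAlgEquiv b
  set A := E (V.ρ g₁) with hA
  set B := E (V.ρ g₂) with hB
  set C := E (V.ρ g₃) with hC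
  set P := E (V.ρ x) with hP
  have key : ∀ u v w : G, u * v = w → E (V.ρ u) * E (V.ρ v) = E (V.ρ w) := by
    intro u v w h
    rw [← map_mul, ← map_mul, h]
  have hA2 : A * A = 1 := by
    have := key g₁ g₁ 1 hg
    rwa [map_one, map_one] at this
  have hAB : A * B = C := key g₁ g₂ g₃ hgg
  have hPA : P * A = B * P := by
    have h1 := key x g₁ (g₂ * x) hx₁
    have h2' := key g₂ x (g₂ * x) rfl
    rw [← h2'] at h1; exact h1
  have hPB : P * B = C * P := by
    have h1 := key x g₂ (g₃ * x) hx₂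
    have h2' := key g₃ x (g₃ * x) rfl
    rw [← h2'] at h1; exact h1
  have hQ : P * E (V.ρ x⁻¹) = 1 := by
    have := key x x⁻¹ 1 (mul_inv_cancel x)
    rwa [map_one, map_one] at this
  have hdetP : P.det ≠ 0 := by
    intro h
    have := congrArg Matrix.det hQ
    rw [Matrix.det_mul, h, zero_mul, Matrix.det_one] at this
    exact zero_ne_one this
  have hdAB : A.det = B.det := by
    have := congrArg Matrix.det hPA
    rw [Matrix.det_mul, Matrix.det_mul] at this
    have h' : A.det * P.det = B.det * P.det := by rw [mul_comm A.det P.det]; rw [this]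
    exact mul_right_cancel₀ hdetP h'
  have hdBC : B.det = C.det := by
    have := congrArg Matrix.det hPB
    rw [Matrix.det_mul, Matrix.det_mul] at this
    have h' : B.det * P.det = C.det * P.det := by rw [mul_comm B.det P.det]; rw [this]
    exact mul_right_cancel₀ hdetP h'
  have hdetA : A.det = 1 := by
    have hc : C.det = A.det * B.det := by rw [← hAB, Matrix.det_mul]
    have hA0 : A.det ≠ 0 := by
      intro h
      have := congrArg Matrix.det hA2
      rw [Matrix.det_mul, h, zero_mul, Matrix.det_one] at this
      exact zero_ne_one this
    have h1' : A.det = A.det * A.det := by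
      conv_lhs => rw [hdAB, hdBC]
      rw [hc, ← hdAB]
    have h2' : A.det * 1 = A.det * A.det := by rw [mul_one]; exact h1'
    exact (mul_left_cancel₀ hA0 h2').symm
  have hBA : B = A := by
    rcases hmat A hA2 hdetA with h | h
    · rw [h] at hPA
      rw [mul_one] at hPA
      have h3 : B * P * E (V.ρ x⁻¹) = P * E (V.ρ x⁻¹) := by rw [← hPA]
      rw [mul_assoc B, hQ, mul_one] at h3
      rw [h3, h]
    · rw [h] at hPA
      have h3 : B * P * E (V.ρ x⁻¹) = P * (-1 : Matrix (Fin 2) (Fin 2) ℂ) * E (V.ρ x⁻¹) := by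
        rw [hPA]
      rw [mul_assoc B, hQ, mul_one] at h3
      rw [h3, mul_neg_one, neg_mul, hQ, h]
  have hCB : C = B := by
    rcases hmat B (by rw [hBA]; exact hA2) (by rw [hBA]; exact hdetA) with h | h
    · rw [h] at hPB
      rw [mul_one] at hPB
      have h3 : C * P * E (V.ρ x⁻¹) = P * E (V.ρ x⁻¹) := by rw [← hPB]
      rw [mul_assoc C, hQ, mul_one] at h3
      rw [h3, h]
    · rw [h] at hPB
      have h3 : C * P * E (V.ρ x⁻¹) = P * (-1 : Matrix (Fin 2) (Fin 2) ℂ) * E (V.ρ x⁻¹) := by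
        rw [hPB]
      rw [mul_assoc C, hQ, mul_one] at h3
      rw [h3, mul_neg_one, neg_mul, hQ, h]
  have hA1 : A = 1 := by
    rcases hmat A hA2 hdetA with h | h
    · exact h
    · exfalso
      have hC1 : C = 1 := by rw [← hAB, hBA, h]; simp
      rw [hCB, hBA, h] at hC1
      have := congr_fun (congr_fun hC1 0) 0
      simp [Matrix.one_apply] at this
      norm_num at this
  refine ⟨?_, ?_, ?_⟩
  · exact E.injective (by rw [← hA, hA1, map_one])
  · exact E.injective (by rw [← hB, hBA, hA1, map_one])
  · exact E.injective (by rw [← hC, hCB, hBA, hA1, map_one])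

end KleinLemma

section CommLemma

private noncomputable def AG2_myMk {G : Type} [Monoid G] (V : FDRep ℂ G) (f : V →ₗ[ℂ] V)
    (hf : ∀ g : G, f * V.ρ g = V.ρ g * f) : V ⟶ V :=
  ⟨InducedCategory.homMk (ModuleCat.ofHom f), fun g => by
    ext1; ext v; exact LinearMap.congr_fun (hf g) v⟩

private theorem AG2_comm_finrank_ne_two {G : Type} [Monoid G] (V : FDRep ℂ G)
    [hV : Simple V] (hc : ∀ g h : G, V.ρ g * V.ρ h = V.ρ h * V.ρ g) :
    finrank ℂ V ≠ 2 := by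
  intro h2
  have hdim : finrank ℂ (V ⟶ V) = 1 := by
    rw [FDRep.finrank_hom_simple_simple V V, if_pos ⟨Iso.refl V⟩]
  have b : Basis (Fin 2) ℂ V := Module.finBasisOfFinrankEq ℂ V h2
  have hb0 : b 0 ≠ 0 := b.ne_zero 0
  have hid : (𝟙 V : V ⟶ V) ≠ 0 := by
    intro h
    have := congrArg (fun f : V ⟶ V => f.hom (b 0)) h
    simp at this
    exact hb0 this
  have hall : ∀ f : V ⟶ V, ∃ c : ℂ, c • (𝟙 V : V ⟶ V) = f :=
    (finrank_eq_one_iff_of_nonzero' (𝟙 V : V ⟶ V) hid).mp hdim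
  have hscal : ∀ g : G, ∃ c : ℂ, ∀ v : V, V.ρ g v = c • v := by
    intro g
    obtain ⟨c, hcη⟩ := hall (AG2_myMk V (V.ρ g) (fun h => hc g h))
    refine ⟨c, fun v => ?_⟩
    have := congrArg (fun f : V ⟶ V => f.hom v) hcη
    exact this.symm
  let f : V →ₗ[ℂ] V := b.constr ℂ ![b 0, 0]
  have hf : ∀ g : G, f * V.ρ g = V.ρ g * f := by
    intro g
    obtain ⟨c, hcg⟩ := hscal g
    ext v
    show f (V.ρ g v) = V.ρ g (f v)
    rw [hcg, hcg, map_smul]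
  obtain ⟨c, hcη⟩ := hall (AG2_myMk V f hf)
  have hfb : ∀ v : V, f v = c • v := by
    intro v
    have := congrArg (fun η : V ⟶ V => η.hom v) hcη
    exact this.symm
  have h0 : f (b 0) = b 0 := by
    show b.constr ℂ ![b 0, 0] (b 0) = b 0
    rw [Basis.constr_basis]
    rfl
  have h1 : f (b 1) = 0 := by
    show b.constr ℂ ![b 0, 0] (b 1) = 0
    rw [Basis.constr_basis]
    rfl
  have hc1 : c = 1 := by
    have := hfb (b 0)
    rw [h0] at this
    have h' : (c - 1) • b 0 = 0 := by rw [sub_smul, one_smul, ← this, sub_self]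
    rcases smul_eq_zero.mp h' with h | h
    · exact sub_eq_zero.mp h
    · exact absurd h hb0
  have hc0 : c = 0 := by
    have := hfb (b 1)
    rw [h1] at this
    rcases smul_eq_zero.mp this.symm with h | h
    · exact h
    · exact absurd h (b.ne_zero 1)
  rw [hc1] at hc0
  exact one_ne_zero hc0

end CommLemma

section PermFacts

set_option maxHeartbeats 1000000 in
private theorem AG2_perm_facts {α : Type*} [DecidableEq α] (a b c d : α)
    (hab : a ≠ b) (hac : a ≠ c) (had : a ≠ d) (hbc : b ≠ c) (hbd : b ≠ d) (hcd : c ≠ d) :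
    (swap a b * swap c d) * (swap a b * swap c d) = 1 ∧
    (swap a b * swap c d) * (swap a c * swap b d) = swap a d * swap b c ∧
    (swap b c * swap c d) * (swap a b * swap c d) = (swap a c * swap b d) * (swap b c * swap c d) ∧
    (swap b c * swap c d) * (swap a c * swap b d) = (swap a d * swap b c) * (swap b c * swap c d) := by
  refine ⟨?_, ?_, ?_, ?_⟩ <;>
  · ext i
    by_cases hia : i = a
    · subst hia; simp [swap_apply_of_ne_of_ne, swap_apply_left, swap_apply_right, hab, hac, had,
        hbc, hbd, hcd, hab.symm, hac.symm, had.symm, hbc.symm, hbd.symm, hcd.symm]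
    · by_cases hib : i = b
      · subst hib; simp [swap_apply_of_ne_of_ne, hab, hac, had, hbc, hbd, hcd, hab.symm, hac.symm,
          had.symm, hbc.symm, hbd.symm, hcd.symm]
      · by_cases hic : i = c
        · subst hic; simp [swap_apply_of_ne_of_ne, hab, hac, had, hbc, hbd, hcd, hab.symm,
            hac.symm, had.symm, hbc.symm, hbd.symm, hcd.symm]
        · by_cases hid : i = d
          · subst hid; simp [swap_apply_of_ne_of_ne, hab, hac, had, hbc, hbd, hcd, hab.symm,
              hac.symm, had.symm, hbc.symm, hbd.symm, hcd.symm]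
          · simp [swap_apply_of_ne_of_ne, hia, hib, hic, hid]

private theorem AG2_mem_alt {n : ℕ} {u v w z : Fin n} (huv : u ≠ v) (hwz : w ≠ z) :
    swap u v * swap w z ∈ alternatingGroup (Fin n) := by
  rw [Equiv.Perm.mem_alternatingGroup, map_mul, Equiv.Perm.sign_swap huv,
    Equiv.Perm.sign_swap hwz]
  decide

end PermFacts

section Kill

private theorem AG2_kill {n : ℕ} (V : FDRep ℂ (alternatingGroup (Fin n)))
    (h2 : finrank ℂ V = 2) (a b c d : Fin n)
    (hab : a ≠ b) (hac : a ≠ c) (had : a ≠ d) (hbc : b ≠ c) (hbd : b ≠ d) (hcd : c ≠ d) :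
    V.ρ ⟨swap a b * swap c d, AG2_mem_alt hab hcd⟩ = 1 := by
  obtain ⟨e1, e2, e3, e4⟩ := AG2_perm_facts a b c d hab hac had hbc hbd hcd
  let g₁ : alternatingGroup (Fin n) := ⟨swap a b * swap c d, AG2_mem_alt hab hcd⟩
  let g₂ : alternatingGroup (Fin n) := ⟨swap a c * swap b d, AG2_mem_alt hac hbd⟩
  let g₃ : alternatingGroup (Fin n) := ⟨swap a d * swap b c, AG2_mem_alt had hbc⟩
  let x : alternatingGroup (Fin n) := ⟨swap b c * swap c d, AG2_mem_alt hbc hcd⟩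
  have hg : g₁ * g₁ = 1 := Subtype.ext e1
  have hgg : g₁ * g₂ = g₃ := Subtype.ext e2
  have hx₁ : x * g₁ = g₂ * x := Subtype.ext e3
  have hx₂ : x * g₂ = g₃ * x := Subtype.ext e4
  exact (AG2_rho_eq_one_of_klein V h2 g₁ g₂ g₃ x hg hgg hx₁ hx₂).1

end Kill

set_option maxHeartbeats 4000000 in
private theorem AG2_fact2 : ∀ p : Equiv.Perm (Fin 2), Equiv.Perm.sign p = 1 → p = 1 := by decide

set_option maxHeartbeats 4000000 in
private theorem AG2_fact3 : ∀ p q : Equiv.Perm (Fin 3),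
    Equiv.Perm.sign p = 1 → Equiv.Perm.sign q = 1 → p * q = q * p := by decide

set_option maxRecDepth 100000 in
set_option maxHeartbeats 4000000 in
private theorem AG2_fact4 : ∀ p q : Equiv.Perm (Fin 4),
    Equiv.Perm.sign p = 1 → Equiv.Perm.sign q = 1 →
      p * q * p⁻¹ * q⁻¹ = 1 ∨
      p * q * p⁻¹ * q⁻¹ = swap 0 1 * swap 2 3 ∨
      p * q * p⁻¹ * q⁻¹ = swap 0 2 * swap 1 3 ∨
      p * q * p⁻¹ * q⁻¹ = swap 0 3 * swap 1 2 := by decide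

/-- For `n ≥ 2`, the alternating group `A_n` has no complex irreducible
representation of degree 2. -/
theorem alternatingGroup_no_irrep_of_degree_two
    (n : ℕ) (hn : 2 ≤ n)
    (V : FDRep ℂ (alternatingGroup (Fin n)))
    (hV : CategoryTheory.Simple V) :
    Module.finrank ℂ V ≠ 2 := by
  haveI := hV
  rcases lt_or_ge n 5 with h5 | h5
  · interval_cases n
    · -- n = 2
      refine AG2_comm_finrank_ne_two V ?_
      intro g h
      have hg1 : g = 1 := Subtype.ext (AG2_fact2 _ (Equiv.Perm.mem_alternatingGroup.mp g.2))
      have hh1 : h = 1 := Subtype.ext (AG2_fact2 _ (Equiv.Perm.mem_alternatingGroup.mp h.2))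
      rw [hg1, hh1]
    · -- n = 3
      refine AG2_comm_finrank_ne_two V ?_
      intro g h
      rw [← map_mul, ← map_mul]
      congr 1
      exact Subtype.ext (AG2_fact3 _ _ (Equiv.Perm.mem_alternatingGroup.mp g.2)
        (Equiv.Perm.mem_alternatingGroup.mp h.2))
    · -- n = 4
      intro h2
      refine AG2_comm_finrank_ne_two V ?_ h2
      intro g h
      have hcom : V.ρ (g * h * g⁻¹ * h⁻¹) = 1 := by
        rcases AG2_fact4 (g : Perm (Fin 4)) (h : Perm (Fin 4))
          (Equiv.Perm.mem_alternatingGroup.mp g.2) (Equiv.Perm.mem_alternatingGroup.mp h.2)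
          with hw | hw | hw | hw
        · have : g * h * g⁻¹ * h⁻¹ = 1 := Subtype.ext hw
          rw [this, map_one]
        · have : g * h * g⁻¹ * h⁻¹ =
              ⟨swap 0 1 * swap 2 3, AG2_mem_alt (by decide) (by decide)⟩ := Subtype.ext hw
          rw [this]
          exact AG2_kill V h2 0 1 2 3 (by decide) (by decide) (by decide) (by decide)
            (by decide) (by decide)
        · have : g * h * g⁻¹ * h⁻¹ =
              ⟨swap 0 2 * swap 1 3, AG2_mem_alt (by decide) (by decide)⟩ := Subtype.ext hw
          rw [this]
          exact AG2_kill V h2 0 2 1 3 (by decide) (by decide) (by decide) (by decide)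
            (by decide) (by decide)
        · have : g * h * g⁻¹ * h⁻¹ =
              ⟨swap 0 3 * swap 1 2, AG2_mem_alt (by decide) (by decide)⟩ := Subtype.ext hw
          rw [this]
          exact AG2_kill V h2 0 3 1 2 (by decide) (by decide) (by decide) (by decide)
            (by decide) (by decide)
      have hgid : g * h = (g * h * g⁻¹ * h⁻¹) * (h * g) := by group
      calc V.ρ g * V.ρ h = V.ρ (g * h) := (map_mul _ _ _).symm
        _ = V.ρ ((g * h * g⁻¹ * h⁻¹) * (h * g)) := by rw [← hgid]
        _ = V.ρ (g * h * g⁻¹ * h⁻¹) * V.ρ (h * g) := map_mul _ _ _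
        _ = V.ρ (h * g) := by rw [hcom, one_mul]
        _ = V.ρ h * V.ρ g := map_mul _ _ _
  · -- n ≥ 5
    intro h2
    let a : Fin n := ⟨0, by omega⟩
    let b : Fin n := ⟨1, by omega⟩
    let c : Fin n := ⟨2, by omega⟩
    let d : Fin n := ⟨3, by omega⟩
    let e : Fin n := ⟨4, by omega⟩
    have hab : a ≠ b := by simp [a, b, Fin.ext_iff]
    have hac : a ≠ c := by simp [a, c, Fin.ext_iff]
    have had : a ≠ d := by simp [a, d, Fin.ext_iff]
    have hae : a ≠ e := by simp [a, e, Fin.ext_iff]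
    have hbc : b ≠ c := by simp [b, c, Fin.ext_iff]
    have hbd : b ≠ d := by simp [b, d, Fin.ext_iff]
    have hbe : b ≠ e := by simp [b, e, Fin.ext_iff]
    have hcd : c ≠ d := by simp [c, d, Fin.ext_iff]
    have hce : c ≠ e := by simp [c, e, Fin.ext_iff]
    have hde : d ≠ e := by simp [d, e, Fin.ext_iff]
    let K : Subgroup (alternatingGroup (Fin n)) :=
      { carrier := {g | V.ρ g = 1}
        mul_mem' := by
          intro p q hp hq
          simp only [Set.mem_setOf_eq] at *
          rw [map_mul, hp, hq, one_mul]
        one_mem' := map_one _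
        inv_mem' := by
          intro p hp
          simp only [Set.mem_setOf_eq] at *
          have hmm := map_mul V.ρ p⁻¹ p
          rw [inv_mul_cancel, map_one, hp, mul_one] at hmm
          exact hmm.symm }
    haveI hKn : K.Normal := by
      constructor
      intro p hp q
      show V.ρ (q * p * q⁻¹) = 1
      rw [map_mul, map_mul, hp, mul_one, ← map_mul, mul_inv_cancel, map_one]
    have h5' : 5 ≤ Fintype.card (Fin n) := by simpa using h5
    have t3 : Equiv.Perm.IsThreeCycle (swap a b * swap a c) :=
      Equiv.Perm.isThreeCycle_swap_mul_swap_same hab hac hbc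
    have ht : (⟨swap a b * swap a c, t3.mem_alternatingGroup⟩ : alternatingGroup (Fin n)) ∈ K := by
      have hdecomp : swap a b * swap a c = (swap a b * swap d e) * (swap d e * swap a c) := by
        rw [mul_assoc, ← mul_assoc (swap d e), swap_mul_self, one_mul]
      have heq : (⟨swap a b * swap a c, t3.mem_alternatingGroup⟩ : alternatingGroup (Fin n)) =
          ⟨swap a b * swap d e, AG2_mem_alt hab hde⟩ *
            ⟨swap d e * swap a c, AG2_mem_alt hde hac⟩ := Subtype.ext hdecomp
      show V.ρ _ = 1
      rw [heq, map_mul,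
        AG2_kill V h2 a b d e hab had hae hbd hbe hde,
        AG2_kill V h2 d e a c hde (Ne.symm had) (Ne.symm hcd) (Ne.symm hae) (Ne.symm hce) hac, one_mul]
    have htop : K = ⊤ := by
      rw [eq_top_iff, ← t3.alternating_normalClosure (by rw [Nat.card_eq_fintype_card]; exact h5')]
      exact Subgroup.normalClosure_le_normal (Set.singleton_subset_iff.mpr ht)
    refine AG2_comm_finrank_ne_two V ?_ h2
    intro g h
    have hg : V.ρ g = 1 := by
      have : g ∈ K := by rw [htop]; exact Subgroup.mem_top g
      exact this
    have hh : V.ρ h = 1 := by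
      have : h ∈ K := by rw [htop]; exact Subgroup.mem_top h
      exact this
    rw [hg, hh]
end

section
/- Let p be an odd prime and let Γ = S_{p-1} act on the cyclic group C_p = ⟨z⟩ ⊂ S_p (z = (1 2 ... p)) via the action ◁' arising from the exact factorization S_p = C_p·S_{p-1} (determined by c·s = (c ▷' s)(c ◁' s) for c ∈ C_p, s ∈ S_{p-1}). Then C_p has no nontrivial fixed points under this action: if z^i ◁' s = z^i for all s ∈ S_{p-1}, then i ≡ 0 mod p. -/
open Fin.NatCast

lemma finRotate_pow_apply (n i : ℕ) (x : Fin (n + 1)) :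
    ((finRotate (n + 1)) ^ i) x = x + (i : Fin (n + 1)) := by
  induction i with
  | zero => simp
  | succ k ih =>
    rw [pow_succ', Equiv.Perm.mul_apply, ih, finRotate_succ_apply]
    push_cast
    rw [add_assoc]

/-- Let `p` be an odd prime, `z = (1 2 ... p)` (i.e. `finRotate p`),
`C_p = ⟨z⟩` and `Γ = S_{p-1}` the stabilizer of the last letter, giving the
exact factorization `S_p = C_p · Γ`. Consider the action `◁'` of `Γ` on `C_p`
determined by `c s = (c ▷' s)(c ◁' s)` with `c ▷' s ∈ Γ` and `c ◁' s ∈ C_p`.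
Then `C_p` has no nontrivial fixed points under this action: if `z^i ◁' s = z^i`
for all `s ∈ Γ` (i.e. for every `s ∈ Γ` there is `t ∈ Γ` with
`z^i s = t z^i`), then `i ≡ 0 (mod p)`. -/
theorem cyclic_no_nontrivial_fixed_points
    (p : ℕ) (hp : p.Prime) (hodd : Odd p) (i : ℕ)
    (h : ∀ s ∈ MulAction.stabilizer (Equiv.Perm (Fin p))
        (⟨p - 1, Nat.sub_lt hp.pos Nat.one_pos⟩ : Fin p),
      ∃ t ∈ MulAction.stabilizer (Equiv.Perm (Fin p))
        (⟨p - 1, Nat.sub_lt hp.pos Nat.one_pos⟩ : Fin p),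
        (finRotate p) ^ i * s = t * (finRotate p) ^ i) :
    p ∣ i := by
  have hp3 : 3 ≤ p := by
    have h2 := hp.two_le
    have := Nat.odd_iff.mp hodd
    omega
  obtain ⟨n, rfl⟩ : ∃ n, p = n + 1 := ⟨p - 1, by omega⟩
  set pt : Fin (n + 1) := ⟨n + 1 - 1, Nat.sub_lt hp.pos Nat.one_pos⟩ with hpt
  set z := finRotate (n + 1) with hz
  set x := (z ^ i)⁻¹ pt with hx
  have hzx : (z ^ i) x = pt := Equiv.apply_symm_apply _ _
  by_contra hdvd
  have hxne : x ≠ pt := by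
    intro hxe
    apply hdvd
    rw [hxe] at hzx
    rw [finRotate_pow_apply, add_eq_left] at hzx
    have : (i : Fin (n + 1)).val = 0 := by rw [hzx]; rfl
    rw [Fin.val_natCast] at this
    exact Nat.dvd_of_mod_eq_zero this
  obtain ⟨y, hy⟩ : ∃ y : Fin (n + 1), y ∉ ({x, pt} : Finset (Fin (n + 1))) := by
    have hcard : ({x, pt} : Finset (Fin (n + 1))).card ≤ 2 :=
      (Finset.card_insert_le _ _).trans (by simp)
    have : ({x, pt}ᶜ : Finset (Fin (n + 1))).Nonempty := by
      rw [← Finset.card_pos, Finset.card_compl, Fintype.card_fin]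
      omega
    obtain ⟨y, hy⟩ := this
    exact ⟨y, Finset.mem_compl.mp hy⟩
  simp only [Finset.mem_insert, Finset.mem_singleton, not_or] at hy
  have hs : Equiv.swap x y ∈ MulAction.stabilizer (Equiv.Perm (Fin (n + 1))) pt := by
    rw [MulAction.mem_stabilizer_iff, Equiv.Perm.smul_def,
      Equiv.swap_apply_of_ne_of_ne (Ne.symm hxne) (Ne.symm hy.2)]
  obtain ⟨t, ht, heq⟩ := h _ hs
  have ht' : t pt = pt := ht
  have := congrArg (fun f : Equiv.Perm (Fin (n + 1)) => f x) heq
  simp only [Equiv.Perm.mul_apply, Equiv.swap_apply_left, hzx, ht'] at this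
  have : y = x := (z ^ i).injective (by rw [this, hzx])
  exact hy.1 this
end
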